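/- Let A be a real m×n matrix with m ≥ n, all rows nonzero, and Ax = b, and let σ > 0 satisfy ‖A v‖ ≥ σ·‖v‖ for all v ∈ ℝ^n. Then for every x_0 ∈ ℝ^n and every k ∈ ℕ, the random Kaczmarz process of length k satisfies E[ ‖x_k − x‖² ] ≤ (1 − σ²/‖A‖_F²)^k · ‖x_0 − x‖². -/

import Mathlib

noncomputable section

/-- The `i`-th row of `A` as a vector in Euclidean space. -/
def rowv {m n : ℕ} (A : Matrix (Fin m) (Fin n) ℝ) (i : Fin m) : EuclideanSpace ℝ (Fin n) :=
  WithLp.toLp 2 (fun j => A i j)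

/-- Matrix-vector multiplication, landing in Euclidean space. -/
def mulV {m n : ℕ} (A : Matrix (Fin m) (Fin n) ℝ) (v : EuclideanSpace ℝ (Fin n)) :
    EuclideanSpace ℝ (Fin m) := WithLp.toLp 2 (fun i => ∑ j, A i j * v j)

/-- The square of the Frobenius norm `‖A‖_F²`. -/
def frobSq {m n : ℕ} (A : Matrix (Fin m) (Fin n) ℝ) : ℝ := ∑ i, ∑ j, (A i j) ^ 2

/-- The operator norm `‖A‖` (ℓ² → ℓ²). -/
def opN {m n : ℕ} (A : Matrix (Fin m) (Fin n) ℝ) : ℝ :=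
  ‖LinearMap.toContinuousLinearMap (Matrix.toEuclideanLin A)‖

/-- Orthogonal projection of `w` onto the hyperplane `{v : ⟨a_i, v⟩ = b_i}`. -/
def proj {m n : ℕ} (A : Matrix (Fin m) (Fin n) ℝ) (b : EuclideanSpace ℝ (Fin m)) (i : Fin m)
    (w : EuclideanSpace ℝ (Fin n)) : EuclideanSpace ℝ (Fin n) :=
  w + ((b i - inner (𝕜 := ℝ) (rowv A i) w) / ‖rowv A i‖ ^ 2) • rowv A i

/-- The Kaczmarz trajectory: `traj A b x0 ω j` is `x_j(ω) = π_{ω_j} ⋯ π_{ω_1} x_0`. -/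
def traj {m n k : ℕ} (A : Matrix (Fin m) (Fin n) ℝ) (b : EuclideanSpace ℝ (Fin m))
    (x0 : EuclideanSpace ℝ (Fin n)) (ω : Fin k → Fin m) : ℕ → EuclideanSpace ℝ (Fin n)
  | 0 => x0
  | j + 1 => if h : j < k then proj A b (ω ⟨j, h⟩) (traj A b x0 ω j) else traj A b x0 ω j

/-- The weight `∏_j ‖a_{ω_j}‖²/‖A‖_F²` of an index sequence `ω` for the random Kaczmarz
process. -/
def wt {m n k : ℕ} (A : Matrix (Fin m) (Fin n) ℝ) (ω : Fin k → Fin m) : ℝ :=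
  ∏ j, ‖rowv A (ω j)‖ ^ 2 / frobSq A

end


lemma mulV_apply' {m n : ℕ} (A : Matrix (Fin m) (Fin n) ℝ) (v : EuclideanSpace ℝ (Fin n))
    (i : Fin m) : mulV A v i = inner (𝕜 := ℝ) (rowv A i) v := by
  simp [mulV, rowv, PiLp.inner_apply, RCLike.inner_apply, conj_trivial]
  exact Finset.sum_congr rfl fun _ _ => mul_comm _ _

lemma norm_sq_eucl' {n : ℕ} (u : EuclideanSpace ℝ (Fin n)) : ‖u‖ ^ 2 = ∑ i, (u i) ^ 2 := by
  rw [EuclideanSpace.norm_sq_eq]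
  simp [Real.norm_eq_abs, sq_abs]

lemma frob_eq' {m n : ℕ} (A : Matrix (Fin m) (Fin n) ℝ) :
    frobSq A = ∑ i, ‖rowv A i‖ ^ 2 := by
  simp [frobSq, norm_sq_eucl', rowv]

lemma mulV_norm_sq' {m n : ℕ} (A : Matrix (Fin m) (Fin n) ℝ) (v : EuclideanSpace ℝ (Fin n)) :
    ‖mulV A v‖ ^ 2 = ∑ i, (inner (𝕜 := ℝ) (rowv A i) v) ^ 2 := by
  rw [norm_sq_eucl']
  simp [mulV_apply']

lemma proj_norm_sq' {m n : ℕ} (A : Matrix (Fin m) (Fin n) ℝ) (b : EuclideanSpace ℝ (Fin m))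
    (x : EuclideanSpace ℝ (Fin n)) (hAx : mulV A x = b) (i : Fin m) (hi : rowv A i ≠ 0)
    (w : EuclideanSpace ℝ (Fin n)) :
    ‖proj A b i w - x‖ ^ 2
      = ‖w - x‖ ^ 2 - (inner (𝕜 := ℝ) (rowv A i) (w - x)) ^ 2 / ‖rowv A i‖ ^ 2 := by
  set a := rowv A i with ha
  have hna : ‖a‖ ≠ 0 := norm_ne_zero_iff.mpr hi
  have hb : b i = inner (𝕜 := ℝ) a x := by rw [← hAx]; exact mulV_apply' A x i
  have hdec : proj A b i w - x
      = (w - x) + ((-(inner (𝕜 := ℝ) a (w - x))) / ‖a‖ ^ 2) • a := by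
    simp only [proj, hb, ← ha, inner_sub_right]
    have : (inner (𝕜 := ℝ) a x - inner (𝕜 := ℝ) a w) / ‖a‖ ^ 2
        = (-(inner (𝕜 := ℝ) a w - inner (𝕜 := ℝ) a x)) / ‖a‖ ^ 2 := by ring_nf
    rw [this]
    abel
  rw [hdec, norm_add_sq_real, real_inner_smul_right, norm_smul]
  rw [mul_pow, Real.norm_eq_abs, sq_abs, real_inner_comm (w - x) a]
  generalize inner (𝕜 := ℝ) a (w - x) = t
  field_simp
  ring

/-- One-step expected contraction. -/
lemma kaczmarz_step {m n : ℕ} (A : Matrix (Fin m) (Fin n) ℝ)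
    (hrows : ∀ i, rowv A i ≠ 0) (x : EuclideanSpace ℝ (Fin n))
    (b : EuclideanSpace ℝ (Fin m)) (hAx : mulV A x = b)
    (σ : ℝ) (hσ : 0 ≤ σ) (hlow : ∀ v : EuclideanSpace ℝ (Fin n), σ * ‖v‖ ≤ ‖mulV A v‖)
    (hF : 0 < frobSq A) (w : EuclideanSpace ℝ (Fin n)) :
    ∑ i, ‖rowv A i‖ ^ 2 / frobSq A * ‖proj A b i w - x‖ ^ 2
      ≤ (1 - σ ^ 2 / frobSq A) * ‖w - x‖ ^ 2 := by
  have hFne : frobSq A ≠ 0 := ne_of_gt hF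
  have hsum : ∑ i, ‖rowv A i‖ ^ 2 / frobSq A * ‖proj A b i w - x‖ ^ 2
      = ‖w - x‖ ^ 2 - ‖mulV A (w - x)‖ ^ 2 / frobSq A := by
    have : ∀ i : Fin m, ‖rowv A i‖ ^ 2 / frobSq A * ‖proj A b i w - x‖ ^ 2
        = ‖rowv A i‖ ^ 2 / frobSq A * ‖w - x‖ ^ 2
          - (inner (𝕜 := ℝ) (rowv A i) (w - x)) ^ 2 / frobSq A := by
      intro i
      have hna : (‖rowv A i‖ : ℝ) ^ 2 ≠ 0 := by
        have := norm_ne_zero_iff.mpr (hrows i); positivity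
      rw [proj_norm_sq' A b x hAx i (hrows i) w]
      field_simp
      rw [mul_sub]; congr 1; exact mul_div_cancel₀ _ hna
    rw [Finset.sum_congr rfl fun i _ => this i]
    rw [Finset.sum_sub_distrib, ← Finset.sum_div, ← mulV_norm_sq']
    rw [← Finset.sum_mul, ← Finset.sum_div, ← frob_eq', div_self hFne, one_mul]
  rw [hsum]
  have h1 : σ ^ 2 * ‖w - x‖ ^ 2 ≤ ‖mulV A (w - x)‖ ^ 2 := by
    have := hlow (w - x)
    have h2 : (σ * ‖w - x‖) ^ 2 ≤ ‖mulV A (w - x)‖ ^ 2 := by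
      apply pow_le_pow_left₀ (by positivity) this
    calc σ ^ 2 * ‖w - x‖ ^ 2 = (σ * ‖w - x‖) ^ 2 := by ring
      _ ≤ _ := h2
  have h4 : σ ^ 2 * ‖w - x‖ ^ 2 / frobSq A ≤ ‖mulV A (w - x)‖ ^ 2 / frobSq A := by gcongr
  have hexp : (1 - σ ^ 2 / frobSq A) * ‖w - x‖ ^ 2
      = ‖w - x‖ ^ 2 - σ ^ 2 * ‖w - x‖ ^ 2 / frobSq A := by ring
  rw [hexp]
  linarith

lemma traj_cast {m n k : ℕ} (A : Matrix (Fin m) (Fin n) ℝ) (b : EuclideanSpace ℝ (Fin m))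
    (x0 : EuclideanSpace ℝ (Fin n)) (ω : Fin (k + 1) → Fin m) (j : ℕ) (hj : j ≤ k) :
    traj A b x0 ω j = traj A b x0 (ω ∘ Fin.castSucc) j := by
  induction j with
  | zero => rfl
  | succ j ih =>
    have hjk : j < k := hj
    have hj1 : j < k + 1 := Nat.lt_succ_of_lt hjk
    rw [traj, traj, dif_pos hjk, dif_pos hj1, ih (le_of_lt hjk)]
    congr 1

/-- **Strohmer–Vershynin convergence bound.** If `σ > 0` satisfies `‖Av‖ ≥ σ‖v‖` for all
`v`, then the random Kaczmarz process satisfies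
`E ‖x_k − x‖² ≤ (1 − σ²/‖A‖_F²)^k ‖x₀ − x‖²`. -/
theorem strohmer_vershynin {m n : ℕ} (A : Matrix (Fin m) (Fin n) ℝ) (hmn : m ≥ n)
    (hrows : ∀ i, rowv A i ≠ 0) (x : EuclideanSpace ℝ (Fin n))
    (b : EuclideanSpace ℝ (Fin m)) (hAx : mulV A x = b)
    (σ : ℝ) (hσ : 0 < σ) (hlow : ∀ v : EuclideanSpace ℝ (Fin n), σ * ‖v‖ ≤ ‖mulV A v‖)
    (x0 : EuclideanSpace ℝ (Fin n)) (k : ℕ) :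
    ∑ ω : Fin k → Fin m, wt A ω * ‖traj A b x0 ω k - x‖ ^ 2 ≤
      (1 - σ ^ 2 / frobSq A) ^ k * ‖x0 - x‖ ^ 2 := by
  rcases Nat.eq_zero_or_pos n with hn | hn
  · -- trivial space
    subst hn
    have hx : ∀ u : EuclideanSpace ℝ (Fin 0), u = 0 := fun u => Subsingleton.elim u 0
    have h0 : ∀ (u v : EuclideanSpace ℝ (Fin 0)), ‖u - v‖ ^ 2 = 0 := by
      intro u v; rw [hx (u - v)]; simp
    simp only [h0, mul_zero, Finset.sum_const_zero]
    exact le_refl 0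
  -- main case
  have hFpos : 0 < frobSq A := by
    obtain ⟨v, hv⟩ : ∃ v : EuclideanSpace ℝ (Fin n), v ≠ 0 := by
      refine ⟨WithLp.toLp 2 (fun _ : Fin n => (1:ℝ)), ?_⟩
      intro h
      have := congrArg (fun v : EuclideanSpace ℝ (Fin n) => v ⟨0, hn⟩) h
      simp at this
    have hv' : 0 < ‖v‖ := norm_pos_iff.mpr hv
    have h1 : 0 < ‖mulV A v‖ := lt_of_lt_of_le (by positivity) (hlow v)
    have h2 : ‖mulV A v‖ ^ 2 ≤ frobSq A * ‖v‖ ^ 2 := by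
      rw [mulV_norm_sq', frob_eq', Finset.sum_mul]
      apply Finset.sum_le_sum
      intro i _
      have := abs_real_inner_le_norm (rowv A i) v
      calc (inner (𝕜 := ℝ) (rowv A i) v) ^ 2 = |inner (𝕜 := ℝ) (rowv A i) v| ^ 2 := (sq_abs _).symm
        _ ≤ (‖rowv A i‖ * ‖v‖) ^ 2 := by apply pow_le_pow_left₀ (abs_nonneg _) this
        _ = ‖rowv A i‖ ^ 2 * ‖v‖ ^ 2 := by ring
    nlinarith
  have hσF : σ ^ 2 ≤ frobSq A := by
    obtain ⟨v, hv⟩ : ∃ v : EuclideanSpace ℝ (Fin n), v ≠ 0 := by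
      refine ⟨WithLp.toLp 2 (fun _ : Fin n => (1:ℝ)), ?_⟩
      intro h
      have := congrArg (fun v : EuclideanSpace ℝ (Fin n) => v ⟨0, hn⟩) h
      simp at this
    have hv' : 0 < ‖v‖ := norm_pos_iff.mpr hv
    have h2 : ‖mulV A v‖ ^ 2 ≤ frobSq A * ‖v‖ ^ 2 := by
      rw [mulV_norm_sq', frob_eq', Finset.sum_mul]
      apply Finset.sum_le_sum
      intro i _
      have := abs_real_inner_le_norm (rowv A i) v
      calc (inner (𝕜 := ℝ) (rowv A i) v) ^ 2 = |inner (𝕜 := ℝ) (rowv A i) v| ^ 2 := (sq_abs _).symm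
        _ ≤ (‖rowv A i‖ * ‖v‖) ^ 2 := by apply pow_le_pow_left₀ (abs_nonneg _) this
        _ = ‖rowv A i‖ ^ 2 * ‖v‖ ^ 2 := by ring
    have h3 : (σ * ‖v‖) ^ 2 ≤ ‖mulV A v‖ ^ 2 :=
      pow_le_pow_left₀ (by positivity) (hlow v) 2
    nlinarith [pow_pos hv' 2]
  have hcontr : 0 ≤ 1 - σ ^ 2 / frobSq A := by
    have : σ ^ 2 / frobSq A ≤ 1 := (div_le_one hFpos).mpr hσF
    linarith
  have hwt : ∀ {k' : ℕ} (ω : Fin k' → Fin m), 0 ≤ wt A ω := by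
    intro k' ω
    apply Finset.prod_nonneg
    intro j _
    positivity
  induction k with
  | zero =>
    simp [wt, traj]
  | succ k ih =>
    -- reindex over (Fin m) × (Fin k → Fin m) via snoc
    have hre : ∑ ω : Fin (k + 1) → Fin m, wt A ω * ‖traj A b x0 ω (k + 1) - x‖ ^ 2
        = ∑ p : Fin m × (Fin k → Fin m),
            (wt A p.2 * (‖rowv A p.1‖ ^ 2 / frobSq A)) *
              ‖proj A b p.1 (traj A b x0 p.2 k) - x‖ ^ 2 := by
      rw [← Fintype.sum_equiv (Fin.snocEquiv (fun _ : Fin (k+1) => Fin m))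
        _ (fun ω => wt A ω * ‖traj A b x0 ω (k + 1) - x‖ ^ 2)]
      intro p
      obtain ⟨i, ω'⟩ := p
      have hω : (Fin.snocEquiv (fun _ : Fin (k+1) => Fin m)) (i, ω') = Fin.snoc ω' i := rfl
      rw [hω]
      have hcomp : (Fin.snoc ω' i : Fin (k+1) → Fin m) ∘ Fin.castSucc = ω' := by
        funext j; simp [Fin.snoc_castSucc]
      have htraj : traj A b x0 (Fin.snoc ω' i) (k + 1) = proj A b i (traj A b x0 ω' k) := by
        rw [traj, dif_pos (Nat.lt_succ_self k)]
        have : (⟨k, Nat.lt_succ_self k⟩ : Fin (k+1)) = Fin.last k := rfl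
        rw [this, Fin.snoc_last, traj_cast A b x0 _ k (le_refl k), hcomp]
      have hwt' : wt A (Fin.snoc ω' i : Fin (k+1) → Fin m)
          = wt A ω' * (‖rowv A i‖ ^ 2 / frobSq A) := by
        unfold wt
        rw [Fin.prod_univ_castSucc]
        simp [Fin.snoc_castSucc, Fin.snoc_last]
      rw [htraj, hwt']
    rw [hre, Fintype.sum_prod_type_right]
    have hstep : ∀ ω' : Fin k → Fin m,
        ∑ i : Fin m, (wt A ω' * (‖rowv A i‖ ^ 2 / frobSq A)) *
            ‖proj A b i (traj A b x0 ω' k) - x‖ ^ 2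
          ≤ wt A ω' * ((1 - σ ^ 2 / frobSq A) * ‖traj A b x0 ω' k - x‖ ^ 2) := by
      intro ω'
      have := kaczmarz_step A hrows x b hAx σ (le_of_lt hσ) hlow hFpos (traj A b x0 ω' k)
      calc ∑ i : Fin m, (wt A ω' * (‖rowv A i‖ ^ 2 / frobSq A)) *
              ‖proj A b i (traj A b x0 ω' k) - x‖ ^ 2
          = wt A ω' * ∑ i : Fin m, ‖rowv A i‖ ^ 2 / frobSq A *
              ‖proj A b i (traj A b x0 ω' k) - x‖ ^ 2 := by
            rw [Finset.mul_sum]; congr 1; funext i; ring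
        _ ≤ _ := mul_le_mul_of_nonneg_left this (hwt ω')
    calc ∑ ω' : Fin k → Fin m, ∑ i : Fin m,
            (wt A ω' * (‖rowv A i‖ ^ 2 / frobSq A)) *
              ‖proj A b i (traj A b x0 ω' k) - x‖ ^ 2
        ≤ ∑ ω' : Fin k → Fin m,
            wt A ω' * ((1 - σ ^ 2 / frobSq A) * ‖traj A b x0 ω' k - x‖ ^ 2) :=
          Finset.sum_le_sum fun ω' _ => hstep ω'
      _ = (1 - σ ^ 2 / frobSq A) *
            ∑ ω' : Fin k → Fin m, wt A ω' * ‖traj A b x0 ω' k - x‖ ^ 2 := by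
          rw [Finset.mul_sum]; congr 1; funext ω'; ring
      _ ≤ (1 - σ ^ 2 / frobSq A) * ((1 - σ ^ 2 / frobSq A) ^ k * ‖x0 - x‖ ^ 2) :=
          mul_le_mul_of_nonneg_left ih hcontr
      _ = (1 - σ ^ 2 / frobSq A) ^ (k + 1) * ‖x0 - x‖ ^ 2 := by ring
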